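/- Let (g, γ) be a G-circuit, and define γⁿ, gₙ and ξ = ξ(g, γ) as described. Then: (1) d(γⁿ) = r(γⁿ⁺¹) for all n ≥ 1, so the infinite concatenation ξ = γ¹γ²γ³⋯ is a well-defined infinite path; (2) for every finite path β with d(β) = r(γ), the triple s := (βγ, g, β) lies in S_{G,E}, and βξ is a fixed point of s, i.e. (βγ)(g·ξ) = βξ. -/

import Mathlib

/-- Finite paths in a directed graph: `Pth.nil x` is the length-zero path at the
vertex `x`, and `Pth.cons e p` is the path whose first edge is `e`, followed by `p`. -/
inductive Pth (V : Type) (Ed : Type) : Type where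
  | nil : V → Pth V Ed
  | cons : Ed → Pth V Ed → Pth V Ed

/-- A self-similar graph `(G, E, φ)`: a group `G` acting on a directed graph `E`
(with vertex set `V`, edge set `Ed`, range `r` and source `d`) by graph
automorphisms, together with a one-cocycle `φ : G × E¹ → G` for the action on
edges, satisfying `φ(g,e)·x = g·x` for all vertices `x`. -/
structure SelfSimGraph (G V Ed : Type) [Group G] : Type where
  r : Ed → V
  d : Ed → V
  actV : G → V → V
  actE : G → Ed → Ed
  actV_one : ∀ x, actV 1 x = x
  actV_mul : ∀ g h x, actV (g * h) x = actV g (actV h x)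
  actE_one : ∀ e, actE 1 e = e
  actE_mul : ∀ g h e, actE (g * h) e = actE g (actE h e)
  r_act : ∀ g e, r (actE g e) = actV g (r e)
  d_act : ∀ g e, d (actE g e) = actV g (d e)
  phi : G → Ed → G
  phi_cocycle : ∀ g h e, phi (g * h) e = phi g (actE h e) * phi h e
  phi_vertex : ∀ g e x, actV (phi g e) x = actV g x

variable {G V Ed : Type} [Group G]

/-- The range `r(α)` of a finite path. -/
def rngP (S : SelfSimGraph G V Ed) : Pth V Ed → V
  | Pth.nil x => x
  | Pth.cons e _ => S.r e

/-- The source `d(α)` of a finite path. -/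
def srcP (S : SelfSimGraph G V Ed) : Pth V Ed → V
  | Pth.nil x => x
  | Pth.cons _ p => srcP S p

/-- Well-formedness of a finite path: consecutive edges match, `d(αᵢ) = r(αᵢ₊₁)`. -/
def WFP (S : SelfSimGraph G V Ed) : Pth V Ed → Prop
  | Pth.nil _ => True
  | Pth.cons e p => S.d e = rngP S p ∧ WFP S p

/-- The length of a finite path. -/
def lenP : Pth V Ed → ℕ
  | Pth.nil _ => 0
  | Pth.cons _ p => lenP p + 1

/-- Concatenation `αβ` of finite paths (meaningful when `d(α) = r(β)`). -/
def compP : Pth V Ed → Pth V Ed → Pth V Ed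
  | Pth.nil _, q => q
  | Pth.cons e p, q => Pth.cons e (compP p q)

/-- The action of `G` extended to finite paths:
`g·x = g·x` on vertices and `g·(eα) = (g·e)(φ(g,e)·α)`. -/
def actP (S : SelfSimGraph G V Ed) : G → Pth V Ed → Pth V Ed
  | g, Pth.nil x => Pth.nil (S.actV g x)
  | g, Pth.cons e p => Pth.cons (S.actE g e) (actP S (S.phi g e) p)

/-- The cocycle extended to finite paths:
`φ(g,x) = g` on vertices and `φ(g, eα) = φ(φ(g,e), α)`. -/
def phiP (S : SelfSimGraph G V Ed) : G → Pth V Ed → G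
  | g, Pth.nil _ => g
  | g, Pth.cons e p => phiP S (S.phi g e) p

/-- A path `τ` is strongly fixed by `g` if `g·τ = τ` and `φ(g,τ) = 1`. -/
def StronglyFixed (S : SelfSimGraph G V Ed) (g : G) (τ : Pth V Ed) : Prop :=
  WFP S τ ∧ actP S g τ = τ ∧ phiP S g τ = 1

/-- `(G,E,φ)` is pseudo free if `g·e = e` and `φ(g,e) = 1` imply `g = 1`. -/
def PseudoFree (S : SelfSimGraph G V Ed) : Prop :=
  ∀ (g : G) (e : Ed), S.actE g e = e → S.phi g e = 1 → g = 1

/-- `p` is a prefix (initial segment) of `q`: `q = pε` for some path `ε`. -/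
def IsPrefixP (S : SelfSimGraph G V Ed) (p q : Pth V Ed) : Prop :=
  ∃ ε, WFP S ε ∧ rngP S ε = srcP S p ∧ compP p ε = q

/-- The set `M_g` of minimal strongly fixed paths for `g`: strongly fixed paths
none of whose proper prefixes is strongly fixed. -/
def MinSF (S : SelfSimGraph G V Ed) (g : G) : Set (Pth V Ed) :=
  {μ | StronglyFixed S g μ ∧ ∀ p, IsPrefixP S p μ → p ≠ μ → ¬StronglyFixed S g p}

/-- Well-formedness of an infinite path, viewed as a sequence of edges:
`d(ξᵢ) = r(ξᵢ₊₁)`. -/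
def InfWF (S : SelfSimGraph G V Ed) (ξ : ℕ → Ed) : Prop :=
  ∀ i, S.d (ξ i) = S.r (ξ (i + 1))

/-- The range `r(ξ)` of an infinite path. -/
def rngInf (S : SelfSimGraph G V Ed) (ξ : ℕ → Ed) : V := S.r (ξ 0)

/-- `takeP S ξ n` is the finite path `ξ|ₙ = ξ₁⋯ξₙ` (with `ξ|₀ = r(ξ₁)`). -/
def takeP (S : SelfSimGraph G V Ed) : (ℕ → Ed) → ℕ → Pth V Ed
  | ξ, 0 => Pth.nil (S.r (ξ 0))
  | ξ, n + 1 => Pth.cons (ξ 0) (takeP S (fun i => ξ (i + 1)) n)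

/-- Membership of an infinite path in the cylinder `Z(α)`:
the initial segment of `ξ` of length `|α|` equals `α`. -/
def InZ (S : SelfSimGraph G V Ed) (α : Pth V Ed) (ξ : ℕ → Ed) : Prop :=
  takeP S ξ (lenP α) = α

/-- The infinite path `αξ` obtained by prepending a finite path to an infinite one. -/
def prepSeq : Pth V Ed → (ℕ → Ed) → ℕ → Ed
  | Pth.nil _, ξ, n => ξ n
  | Pth.cons e _, _, 0 => e
  | Pth.cons _ p, ξ, n + 1 => prepSeq p ξ n

/-- Dropping the first `k` edges of an infinite path. -/
def dropSeq (k : ℕ) (ξ : ℕ → Ed) : ℕ → Ed := fun n => ξ (n + k)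

/-- The space `E^∞` of infinite paths. -/
def InfPath (S : SelfSimGraph G V Ed) : Type := {ξ : ℕ → Ed // InfWF S ξ}

/-- The topology of `E^∞`: the subspace topology induced from the product
topology on `(E¹)^ℕ`, `E¹` being discrete.  Its basis consists of the
cylinders `Z(α)`. -/
def infTop (S : SelfSimGraph G V Ed) : TopologicalSpace (InfPath S) :=
  TopologicalSpace.induced (fun ξ => ξ.1)
    (@Pi.topologicalSpace ℕ (fun _ => Ed) (fun _ => ⊥))

/-- Specification of the (unique) action of `G` on `E^∞`: `(g·ξ)|ₙ = g·(ξ|ₙ)`. -/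
def ActSpec (S : SelfSimGraph G V Ed) (act : G → (ℕ → Ed) → ℕ → Ed) : Prop :=
  ∀ (g : G) (ξ : ℕ → Ed) (n : ℕ), takeP S (act g ξ) n = actP S g (takeP S ξ n)

/-- The action of a triple `s = (α, g, β) ∈ S_{G,E}` on `E^∞`: it sends
`βξ ∈ Z(β)` to `α(g·ξ)`. -/
def sActSeq (S : SelfSimGraph G V Ed) (act : G → (ℕ → Ed) → ℕ → Ed)
    (α : Pth V Ed) (g : G) (β : Pth V Ed) (ξ : ℕ → Ed) : ℕ → Ed :=
  prepSeq α (act g (dropSeq (lenP β) ξ))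

/-- The set of fixed points in `E^∞` of the element `s = (α, g, β)` of `S_{G,E}`. -/
def FixSet (S : SelfSimGraph G V Ed) (act : G → (ℕ → Ed) → ℕ → Ed)
    (α : Pth V Ed) (g : G) (β : Pth V Ed) : Set (InfPath S) :=
  {η | InZ S β η.1 ∧ sActSeq S act α g β η.1 = η.1}

/-- A vertex `x` is simple if `r⁻¹(x)` is a singleton. -/
def SimpleVtx (S : SelfSimGraph G V Ed) (x : V) : Prop := ∃! e : Ed, S.r e = x

/-- A path `γ = γ₁⋯γₙ` has no entry if `d(γᵢ)` is simple for every `i`. -/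
def NoEntry (S : SelfSimGraph G V Ed) : Pth V Ed → Prop
  | Pth.nil _ => True
  | Pth.cons e p => SimpleVtx S (S.d e) ∧ NoEntry S p

/-- A circuit: a path `γ` of nonzero length with `d(γ) = r(γ)`. -/
def Circuit (S : SelfSimGraph G V Ed) (γ : Pth V Ed) : Prop :=
  WFP S γ ∧ 1 ≤ lenP γ ∧ srcP S γ = rngP S γ

/-- A `G`-circuit: a pair `(g,γ)` with `γ` of nonzero length and `d(γ) = g·r(γ)`. -/
def GCircuit (S : SelfSimGraph G V Ed) (g : G) (γ : Pth V Ed) : Prop :=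
  WFP S γ ∧ 1 ≤ lenP γ ∧ srcP S γ = S.actV g (rngP S γ)

/-- `g` is slack at `x` if all sufficiently long paths with range `x` are
strongly fixed by `g`. -/
def SlackAt (S : SelfSimGraph G V Ed) (g : G) (x : V) : Prop :=
  ∃ n : ℕ, ∀ γ, WFP S γ → rngP S γ = x → n ≤ lenP γ → StronglyFixed S g γ

/-- The sequence `(γⁿ, gₙ)` attached to a `G`-circuit `(g, γ)`:
`γ¹ = γ`, `g₁ = g`, `γⁿ⁺¹ = gₙ·γⁿ`, `gₙ₊₁ = φ(gₙ, γⁿ)` (indexed from `0`). -/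
def circIter (S : SelfSimGraph G V Ed) (g : G) (γ : Pth V Ed) : ℕ → Pth V Ed × G
  | 0 => (γ, g)
  | n + 1 =>
      (actP S (circIter S g γ n).2 (circIter S g γ n).1,
       phiP S (circIter S g γ n).2 (circIter S g γ n).1)

/-- The finite concatenation `γ¹γ²⋯γⁿ`. -/
def circConcat (S : SelfSimGraph G V Ed) (g : G) (γ : Pth V Ed) : ℕ → Pth V Ed
  | 0 => Pth.nil (rngP S γ)
  | n + 1 => compP (circConcat S g γ n) (circIter S g γ n).1

/-- `ξ` is the infinite concatenation `ξ(g,γ) = γ¹γ²γ³⋯`: it is an infinite path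
whose initial segments are the finite concatenations `γ¹⋯γⁿ`. -/
def IsCircPath (S : SelfSimGraph G V Ed) (g : G) (γ : Pth V Ed) (ξ : ℕ → Ed) : Prop :=
  InfWF S ξ ∧ ∀ n, takeP S ξ (lenP (circConcat S g γ n)) = circConcat S g γ n

/-- `x ⇀ y`: there is a finite path with source `x` and range `y`. -/
def RelPath (S : SelfSimGraph G V Ed) (x y : V) : Prop :=
  ∃ α, WFP S α ∧ srcP S α = x ∧ rngP S α = y

/-- `x ∼ y`: `x` and `y` are in the same `G`-orbit. -/
def RelOrb (S : SelfSimGraph G V Ed) (x y : V) : Prop :=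
  ∃ g : G, S.actV g x = y

/-- `x ≫ y`: there is a vertex `u` with `x ⇀ u ∼ y`. -/
def RelGG (S : SelfSimGraph G V Ed) (x y : V) : Prop :=
  ∃ u, RelPath S x u ∧ RelOrb S u y

/-- A nonzero element `(α, g, β)` of `S_{G,E}`: `α, β ∈ E*`, `g ∈ G`, with
`d(α) = g·d(β)`. -/
def SGETriple (S : SelfSimGraph G V Ed) : Type :=
  {t : Pth V Ed × G × Pth V Ed //
    WFP S t.1 ∧ WFP S t.2.2 ∧ srcP S t.1 = S.actV t.2.1 (srcP S t.2.2)}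

/-- The inverse semigroup `S_{G,E}` (as a set): the triples together with `0 = none`. -/
def SGE (S : SelfSimGraph G V Ed) : Type := Option (SGETriple S)

/-- Forget the membership proofs. -/
def sgeToRaw (S : SelfSimGraph G V Ed) : SGE S → Option (Pth V Ed × G × Pth V Ed) :=
  Option.map Subtype.val

/-- The adjoint: `(α, g, β)* = (β, g⁻¹, α)`, `0* = 0`. -/
def starSGE (S : SelfSimGraph G V Ed) : SGE S → SGE S
  | none => none
  | some s =>
      some ⟨(s.1.2.2, s.1.2.1⁻¹, s.1.1),
        ⟨s.2.2.1, s.2.1, by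
          rw [s.2.2.2, ← S.actV_mul, inv_mul_cancel, S.actV_one]⟩⟩

/-- The idempotent `f_α = (α, 1, α)`. -/
def fIdem (S : SelfSimGraph G V Ed) (α : Pth V Ed) (h : WFP S α) : SGE S :=
  some ⟨(α, 1, α), ⟨h, h, by rw [S.actV_one]⟩⟩

/-- Specification of the multiplication of `S_{G,E}`:
`0` is absorbing; `(α,g,β)(γ,h,δ) = (α(g·ε), φ(g,ε)h, δ)` if `γ = βε`;
`(α,g,β)(γ,h,δ) = (α, gφ(h⁻¹,ε)⁻¹, δ(h⁻¹·ε))` if `β = γε`; `0` otherwise. -/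
def MulSpec (S : SelfSimGraph G V Ed) (mul : SGE S → SGE S → SGE S) : Prop :=
  (∀ t, mul none t = none) ∧
  (∀ s, mul s none = none) ∧
  (∀ (s t : SGETriple S) (ε : Pth V Ed),
     WFP S ε → rngP S ε = srcP S s.1.2.2 → t.1.1 = compP s.1.2.2 ε →
       sgeToRaw S (mul (some s) (some t)) =
         some (compP s.1.1 (actP S s.1.2.1 ε), phiP S s.1.2.1 ε * t.1.2.1, t.1.2.2)) ∧
  (∀ (s t : SGETriple S) (ε : Pth V Ed),
     WFP S ε → rngP S ε = srcP S t.1.1 → s.1.2.2 = compP t.1.1 ε →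
       sgeToRaw S (mul (some s) (some t)) =
         some (s.1.1, s.1.2.1 * (phiP S t.1.2.1⁻¹ ε)⁻¹,
               compP t.1.2.2 (actP S t.1.2.1⁻¹ ε))) ∧
  (∀ (s t : SGETriple S),
     (¬∃ ε, WFP S ε ∧ rngP S ε = srcP S s.1.2.2 ∧ t.1.1 = compP s.1.2.2 ε) →
     (¬∃ ε, WFP S ε ∧ rngP S ε = srcP S t.1.1 ∧ s.1.2.2 = compP t.1.1 ε) →
       mul (some s) (some t) = none)

/-- Topological freeness of the standard action of `S_{G,E}` on `E^∞`: for every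
nonzero `s = (α, g, β)`, every interior fixed point `ζ` of `s` satisfies `α = β`
and `ζ ∈ Z(ατ)` for some `τ` strongly fixed by `g`. -/
def TopFree (S : SelfSimGraph G V Ed) (act : G → (ℕ → Ed) → ℕ → Ed) : Prop :=
  ∀ (α : Pth V Ed) (g : G) (β : Pth V Ed),
    WFP S α → WFP S β → srcP S α = S.actV g (srcP S β) →
    ∀ ζ : InfPath S, ζ ∈ @interior (InfPath S) (infTop S) (FixSet S act α g β) →
      α = β ∧ ∃ τ : Pth V Ed, WFP S τ ∧ rngP S τ = srcP S α ∧
        StronglyFixed S g τ ∧ InZ S (compP α τ) ζ.1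

section Aux

variable (S : SelfSimGraph G V Ed)

lemma rngP_actP (g : G) (p : Pth V Ed) : rngP S (actP S g p) = S.actV g (rngP S p) := by
  cases p <;> simp [actP, rngP, S.r_act]

lemma phiP_vertex : ∀ (p : Pth V Ed) (g : G) (x : V),
    S.actV (phiP S g p) x = S.actV g x := by
  intro p
  induction p with
  | nil y => intro g x; rfl
  | cons e p ih => intro g x; simp [phiP, ih, S.phi_vertex]

lemma srcP_actP : ∀ (p : Pth V Ed) (g : G),
    srcP S (actP S g p) = S.actV g (srcP S p) := by
  intro p
  induction p with
  | nil y => intro g; rfl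
  | cons e p ih => intro g; simp [actP, srcP, ih, S.phi_vertex]

lemma lenP_actP : ∀ (p : Pth V Ed) (g : G), lenP (actP S g p) = lenP p := by
  intro p
  induction p with
  | nil y => intro g; rfl
  | cons e p ih => intro g; simp [actP, lenP, ih]

lemma wfp_actP : ∀ (p : Pth V Ed) (g : G), WFP S p → WFP S (actP S g p) := by
  intro p
  induction p with
  | nil y => intro g _; trivial
  | cons e p ih =>
    intro g h
    refine ⟨?_, ih _ h.2⟩
    rw [rngP_actP, S.d_act, h.1, S.phi_vertex]

lemma srcP_compP : ∀ (p q : Pth V Ed), srcP S (compP p q) = srcP S q := by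
  intro p q
  induction p with
  | nil y => rfl
  | cons e p ih => simpa [compP, srcP] using ih

lemma rngP_compP : ∀ (p q : Pth V Ed), rngP S q = srcP S p →
    rngP S (compP p q) = rngP S p := by
  intro p q h
  cases p with
  | nil y => simpa [compP, rngP, srcP] using h
  | cons e p => rfl

lemma lenP_compP : ∀ (p q : Pth V Ed), lenP (compP p q) = lenP p + lenP q := by
  intro p q
  induction p with
  | nil y => simp [compP, lenP]
  | cons e p ih => simp [compP, lenP, ih]; omega

lemma wfp_compP : ∀ (p q : Pth V Ed), WFP S p → WFP S q → rngP S q = srcP S p →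
    WFP S (compP p q) := by
  intro p
  induction p with
  | nil y => intro q _ hq _; exact hq
  | cons e p ih =>
    intro q hp hq hr
    exact ⟨by rw [rngP_compP S p q hr, hp.1], ih q hp.2 hq hr⟩

lemma compP_assoc : ∀ (p q r : Pth V Ed),
    compP (compP p q) r = compP p (compP q r) := by
  intro p q r
  induction p with
  | nil y => rfl
  | cons e p ih => simp [compP, ih]

lemma compP_nil : ∀ (p : Pth V Ed), compP p (Pth.nil (srcP S p)) = p := by
  intro p
  induction p with
  | nil y => rfl
  | cons e p ih => simp [compP, srcP]; exact ih

lemma phiP_compP : ∀ (p q : Pth V Ed) (g : G),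
    phiP S g (compP p q) = phiP S (phiP S g p) q := by
  intro p
  induction p with
  | nil y => intro q g; rfl
  | cons e p ih => intro q g; simp [compP, phiP, ih]

lemma actP_compP : ∀ (p q : Pth V Ed) (g : G),
    actP S g (compP p q) = compP (actP S g p) (actP S (phiP S g p) q) := by
  intro p
  induction p with
  | nil y => intro q g; rfl
  | cons e p ih => intro q g; simp [compP, actP, phiP, ih]

/-- The `i`-th edge of a finite path, if it exists. -/
def nthEdge : Pth V Ed → ℕ → Option Ed
  | Pth.nil _, _ => none
  | Pth.cons e _, 0 => some e
  | Pth.cons _ p, n + 1 => nthEdge p n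

lemma nthEdge_isSome : ∀ (p : Pth V Ed) (i : ℕ), i < lenP p →
    ∃ e, nthEdge p i = some e := by
  intro p
  induction p with
  | nil y => intro i h; simp [lenP] at h
  | cons e p ih =>
    intro i h
    cases i with
    | zero => exact ⟨e, rfl⟩
    | succ j => exact ih j (by simp [lenP] at h; omega)

lemma nthEdge_compP_left : ∀ (p q : Pth V Ed) (i : ℕ), i < lenP p →
    nthEdge (compP p q) i = nthEdge p i := by
  intro p
  induction p with
  | nil y => intro q i h; simp [lenP] at h
  | cons e p ih =>
    intro q i h
    cases i with
    | zero => rfl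
    | succ j => exact ih q j (by simp [lenP] at h; omega)

lemma nthEdge_compP_right : ∀ (p q : Pth V Ed) (j : ℕ),
    nthEdge (compP p q) (lenP p + j) = nthEdge q j := by
  intro p
  induction p with
  | nil y => intro q j; simp [lenP, compP]
  | cons e p ih =>
    intro q j
    have : lenP (Pth.cons e p) + j = (lenP p + j) + 1 := by simp [lenP]; omega
    rw [this]
    exact ih q j

lemma nthEdge_takeP : ∀ (n : ℕ) (ξ : ℕ → Ed) (i : ℕ), i < n →
    nthEdge (takeP S ξ n) i = some (ξ i) := by
  intro n
  induction n with
  | zero => intro ξ i h; omega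
  | succ m ih =>
    intro ξ i h
    cases i with
    | zero => rfl
    | succ j => exact ih (fun k => ξ (k + 1)) j (by omega)

lemma rngP_takeP (ξ : ℕ → Ed) (n : ℕ) : rngP S (takeP S ξ n) = S.r (ξ 0) := by
  cases n <;> rfl

lemma takeP_eq_of : ∀ (p : Pth V Ed) (ξ : ℕ → Ed),
    (∀ i, i < lenP p → nthEdge p i = some (ξ i)) →
    S.r (ξ (lenP p)) = srcP S p → takeP S ξ (lenP p) = p := by
  intro p
  induction p with
  | nil y =>
    intro ξ _ h
    simp [lenP, srcP] at h
    show takeP S ξ 0 = Pth.nil y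
    simp [takeP, h]
  | cons e p ih =>
    intro ξ hn hs
    have h0 : ξ 0 = e := by
      have := hn 0 (by simp [lenP]); simp [nthEdge] at this; exact this.symm
    have : takeP S ξ (lenP (Pth.cons e p)) =
        Pth.cons (ξ 0) (takeP S (fun k => ξ (k + 1)) (lenP p)) := rfl
    rw [this, h0]
    congr 1
    exact ih (fun k => ξ (k + 1))
      (fun i hi => hn (i + 1) (by simp [lenP]; omega)) hs

lemma wfp_takeP_d : ∀ (n : ℕ) (ξ : ℕ → Ed), WFP S (takeP S ξ n) →
    ∀ i, i + 1 < n → S.d (ξ i) = S.r (ξ (i + 1)) := by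
  intro n
  induction n with
  | zero => intro ξ _ i h; omega
  | succ m ih =>
    intro ξ h i hi
    have h' : WFP S (Pth.cons (ξ 0) (takeP S (fun k => ξ (k + 1)) m)) := h
    cases i with
    | zero =>
      have := h'.1
      rwa [rngP_takeP] at this
    | succ j => exact ih (fun k => ξ (k + 1)) h'.2 j (by omega)

end Aux

section Circ

variable (S : SelfSimGraph G V Ed) (g : G) (γ : Pth V Ed) (hγ : GCircuit S g γ)

include hγ

lemma iter_src : ∀ n, srcP S (circIter S g γ n).1 =
    S.actV (circIter S g γ n).2 (rngP S (circIter S g γ n).1) := by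
  intro n
  induction n with
  | zero => exact hγ.2.2
  | succ m ih =>
    show srcP S (actP S _ _) = S.actV (phiP S _ _) (rngP S (actP S _ _))
    rw [srcP_actP, rngP_actP, phiP_vertex, ih]

lemma iter_wfp : ∀ n, WFP S (circIter S g γ n).1 := by
  intro n
  induction n with
  | zero => exact hγ.1
  | succ m ih => exact wfp_actP S _ _ ih

lemma iter_len : ∀ n, lenP (circIter S g γ n).1 = lenP γ := by
  intro n
  induction n with
  | zero => rfl
  | succ m ih => rw [show (circIter S g γ (m+1)).1 = actP S _ _ from rfl, lenP_actP, ih]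

lemma iter_step : ∀ n, srcP S (circIter S g γ n).1 =
    rngP S (circIter S g γ (n + 1)).1 := by
  intro n
  rw [show (circIter S g γ (n+1)).1 = actP S _ _ from rfl, rngP_actP]
  exact iter_src S g γ hγ n

lemma srcP_circConcat : ∀ n, srcP S (circConcat S g γ n) =
    rngP S (circIter S g γ n).1 := by
  intro n
  cases n with
  | zero => rfl
  | succ m =>
    show srcP S (compP _ _) = _
    rw [srcP_compP, iter_step S g γ hγ m]

lemma wfp_circConcat : ∀ n, WFP S (circConcat S g γ n) := by
  intro n
  induction n with
  | zero => trivial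
  | succ m ih =>
    exact wfp_compP S _ _ ih (iter_wfp S g γ hγ m) (srcP_circConcat S g γ hγ m).symm

lemma lenP_circConcat_ge : ∀ n, n ≤ lenP (circConcat S g γ n) := by
  intro n
  induction n with
  | zero => omega
  | succ m ih =>
    show m + 1 ≤ lenP (compP _ _)
    rw [lenP_compP, iter_len S g γ hγ]
    have := hγ.2.1
    omega

lemma lenP_circConcat_mono : ∀ {n m}, n ≤ m →
    lenP (circConcat S g γ n) ≤ lenP (circConcat S g γ m) := by
  intro n m h
  induction m, h using Nat.le_induction with
  | base => exact le_refl _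
  | succ k hk ih =>
    refine le_trans ih ?_
    show _ ≤ lenP (compP _ _)
    rw [lenP_compP]
    omega

lemma nthEdge_circConcat_stab : ∀ n m, n ≤ m → ∀ i, i < lenP (circConcat S g γ n) →
    nthEdge (circConcat S g γ m) i = nthEdge (circConcat S g γ n) i := by
  intro n m h
  induction m, h using Nat.le_induction with
  | base => intro i hi; rfl
  | succ k hk ih =>
    intro i hi
    rw [← ih i hi]
    show nthEdge (compP _ _) i = _
    exact nthEdge_compP_left _ _ i
      (lt_of_lt_of_le hi (lenP_circConcat_mono S g γ hγ hk))

end Circ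
section Circ2

variable (S : SelfSimGraph G V Ed) (g : G) (γ : Pth V Ed) (hγ : GCircuit S g γ)

lemma circIter_shift : ∀ n, circIter S g γ (n + 1) =
    circIter S (phiP S g γ) (actP S g γ) n := by
  intro n
  induction n with
  | zero => rfl
  | succ m ih =>
    show (actP S (circIter S g γ (m+1)).2 (circIter S g γ (m+1)).1,
          phiP S (circIter S g γ (m+1)).2 (circIter S g γ (m+1)).1) = _
    rw [ih]
    rfl

include hγ in
lemma gcircuit_shift : GCircuit S (phiP S g γ) (actP S g γ) :=
  ⟨wfp_actP S γ g hγ.1, by rw [lenP_actP]; exact hγ.2.1, iter_src S g γ hγ 1⟩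

lemma circ_phi_concat : ∀ n, phiP S g (circConcat S g γ n) = (circIter S g γ n).2 := by
  intro n
  induction n with
  | zero => rfl
  | succ m ih =>
    show phiP S g (compP _ _) = _
    rw [phiP_compP, ih]
    rfl

lemma circ_act_concat : ∀ n, actP S g (circConcat S g γ n) =
    circConcat S (phiP S g γ) (actP S g γ) n := by
  intro n
  induction n with
  | zero =>
    show Pth.nil (S.actV g (rngP S γ)) = Pth.nil (rngP S (actP S g γ))
    rw [rngP_actP]
  | succ m ih =>
    show actP S g (compP _ _) = compP _ (circIter S (phiP S g γ) (actP S g γ) m).1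
    rw [actP_compP, ih, circ_phi_concat, ← circIter_shift]
    rfl

include hγ in
lemma circConcat_comp : ∀ n, circConcat S g γ (n + 1) =
    compP γ (circConcat S (phiP S g γ) (actP S g γ) n) := by
  intro n
  induction n with
  | zero =>
    show γ = compP γ (Pth.nil (rngP S (actP S g γ)))
    rw [rngP_actP, ← hγ.2.2, compP_nil]
  | succ m ih =>
    show compP (circConcat S g γ (m+1)) (circIter S g γ (m+1)).1 = compP γ (compP _ _)
    rw [ih, circIter_shift, compP_assoc]

end Circ2

section Prep

variable (S : SelfSimGraph G V Ed)

lemma prepSeq_compP : ∀ (p q : Pth V Ed) (η : ℕ → Ed),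
    prepSeq (compP p q) η = prepSeq p (prepSeq q η) := by
  intro p
  induction p with
  | nil y => intro q η; rfl
  | cons e p ih =>
    intro q η
    funext n
    cases n with
    | zero => rfl
    | succ m => exact congrFun (ih q η) m

lemma takeP_prepSeq : ∀ (p : Pth V Ed) (η : ℕ → Ed) (n : ℕ),
    takeP S (prepSeq p η) (lenP p + n) = compP p (takeP S η n) := by
  intro p
  induction p with
  | nil y =>
    intro η n
    show takeP S (prepSeq (Pth.nil y) η) (0 + n) = takeP S η n
    rw [Nat.zero_add]
    rfl
  | cons e p ih =>
    intro η n
    have hl : lenP (Pth.cons e p) + n = (lenP p + n) + 1 := by simp [lenP]; omega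
    rw [hl]
    show Pth.cons e (takeP S (prepSeq p η) (lenP p + n)) = Pth.cons e (compP p (takeP S η n))
    rw [ih]

end Prep
/-- Given a `G`-circuit `(g, γ)` with attached sequences `γⁿ, gₙ`: (1) the
sources and ranges match, so the infinite concatenation `ξ = γ¹γ²γ³⋯` is a
well-defined infinite path; (2) for every finite path `β` with `d(β) = r(γ)`,
the triple `s = (βγ, g, β)` lies in `S_{G,E}` and `βξ` is a fixed point of `s`,
i.e. `(βγ)(g·ξ) = βξ`. -/
theorem statement11 {G V Ed : Type} [Group G] [Fintype V] [Fintype Ed]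
    (S : SelfSimGraph G V Ed) (hNoSources : ∀ x : V, ∃ e : Ed, S.r e = x)
    (g : G) (γ : Pth V Ed) (hγ : GCircuit S g γ)
    (act : G → (ℕ → Ed) → ℕ → Ed) (hact : ActSpec S act) :
    (∀ n : ℕ, srcP S (circIter S g γ n).1 = rngP S (circIter S g γ (n + 1)).1) ∧
    (∃! ξ : ℕ → Ed, IsCircPath S g γ ξ) ∧
    (∀ β : Pth V Ed, WFP S β → srcP S β = rngP S γ →
      srcP S (compP β γ) = S.actV g (srcP S β) ∧
      ∀ ξ : ℕ → Ed, IsCircPath S g γ ξ →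
        prepSeq (compP β γ) (act g ξ) = prepSeq β ξ) := by
  -- a default edge, extracted from the first edge of `γ`
  obtain ⟨e0, p0, hγcons⟩ : ∃ e q, γ = Pth.cons e q := by
    cases γ with
    | nil y => exact absurd hγ.2.1 (by simp [lenP])
    | cons e q => exact ⟨e, q, rfl⟩
  -- the candidate infinite path
    -- abbreviations
  set C : ℕ → Pth V Ed := circConcat S g γ with hC
  have hCge : ∀ n, n ≤ lenP (C n) := lenP_circConcat_ge S g γ hγ
  set ξ0 : ℕ → Ed := fun i => ((nthEdge (C (i + 1)) i).getD e0) with hξ0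
  -- every `C n` has `ξ0` as its edge sequence
  have hsome : ∀ n i, i < lenP (C n) → nthEdge (C n) i = some (ξ0 i) := by
    intro n i hi
    have hi1 : i < lenP (C (i + 1)) := lt_of_lt_of_le (Nat.lt_succ_self i) (hCge (i + 1))
    obtain ⟨e, he⟩ := nthEdge_isSome (C (i + 1)) i hi1
    have hval : ξ0 i = e := by rw [hξ0]; simp [he]
    rcases le_total n (i + 1) with h | h
    · rw [← nthEdge_circConcat_stab S g γ hγ n (i + 1) h i hi, he, hval]
    · rw [nthEdge_circConcat_stab S g γ hγ (i + 1) n h i hi1, he, hval]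
  -- `C n` is the initial segment of `ξ0` of length `lenP (C n)`
  have htake : ∀ n, takeP S ξ0 (lenP (C n)) = C n := by
    intro n
    apply takeP_eq_of
    · exact fun i hi => hsome n i hi
    · -- `S.r (ξ0 (lenP (C n))) = srcP S (C n)`
      set L := lenP (C n) with hLdef
      obtain ⟨e', q', hq⟩ : ∃ e q, (circIter S g γ n).1 = Pth.cons e q := by
        have hl := iter_len S g γ hγ n
        cases hit : (circIter S g γ n).1 with
        | nil y =>
          rw [hit] at hl
          have := hγ.2.1
          simp [lenP] at hl
          omega
        | cons e q => exact ⟨e, q, rfl⟩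
      have h1 : nthEdge (C (n + 1)) L = some e' := by
        calc nthEdge (C (n + 1)) L = nthEdge (circIter S g γ n).1 0 :=
              nthEdge_compP_right (C n) (circIter S g γ n).1 0
          _ = some e' := by rw [hq]; rfl
      have h2 : L < lenP (C (n + 1)) := by
        have : lenP (C (n + 1)) = L + lenP γ := by
          show lenP (compP _ _) = _
          rw [lenP_compP, iter_len S g γ hγ]
        have := hγ.2.1
        omega
      have h3 := hsome (n + 1) L h2
      rw [h1] at h3
      have h4 : ξ0 L = e' := by injection h3.symm
      rw [h4]
      have : rngP S (circIter S g γ n).1 = S.r e' := by rw [hq]; rfl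
      rw [srcP_circConcat S g γ hγ n, this]
  -- `ξ0` is a well-defined infinite path
  have hwf : InfWF S ξ0 := by
    intro i
    have hlt : i + 1 < lenP (C (i + 2)) := lt_of_lt_of_le (by omega) (hCge (i + 2))
    exact wfp_takeP_d S (lenP (C (i + 2))) ξ0
      (by rw [htake]; exact wfp_circConcat S g γ hγ (i + 2)) i hlt
  have hcirc : IsCircPath S g γ ξ0 := ⟨hwf, htake⟩
  -- uniqueness argument, in a reusable form:
  have huniq : ∀ ξ' : ℕ → Ed, (∀ n, takeP S ξ' (lenP (C n)) = C n) → ξ' = ξ0 := by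
    intro ξ' h'
    funext i
    have hi : i < lenP (C (i + 1)) := lt_of_lt_of_le (Nat.lt_succ_self i) (hCge (i + 1))
    have t1 : nthEdge (takeP S ξ' (lenP (C (i + 1)))) i = some (ξ' i) :=
      nthEdge_takeP S _ ξ' i hi
    have t2 : nthEdge (takeP S ξ0 (lenP (C (i + 1)))) i = some (ξ0 i) :=
      nthEdge_takeP S _ ξ0 i hi
    rw [h' (i + 1)] at t1
    rw [htake (i + 1)] at t2
    rw [t1] at t2
    injection t2
  refine ⟨iter_step S g γ hγ, ⟨ξ0, hcirc, fun ξ' h' => huniq ξ' h'.2⟩, ?_⟩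
  intro β hβ hsrc
  constructor
  · rw [srcP_compP, hγ.2.2, hsrc]
  · intro ξ hξ
    -- the shifted circuit
    set g2 : G := phiP S g γ with hg2
    set γ2 : Pth V Ed := actP S g γ with hγ2
    have hγ2c : GCircuit S g2 γ2 := gcircuit_shift S g γ hγ
    set C' : ℕ → Pth V Ed := circConcat S g2 γ2 with hC'
    -- `act g ξ` has the `C'` as initial segments
    have hlenCC' : ∀ n, lenP (C' n) = lenP (C n) := by
      intro n
      rw [hC', ← circ_act_concat S g γ n, lenP_actP]
    have htake' : ∀ n, takeP S (act g ξ) (lenP (C' n)) = C' n := by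
      intro n
      rw [hlenCC' n, hact g ξ (lenP (C n)), hξ.2 n]
      exact circ_act_concat S g γ n
    -- the key identity : `γ (g·ξ) = ξ`
    have hkey : prepSeq γ (act g ξ) = ξ := by
      funext i
      have hmlen : lenP (C (i + 1)) = lenP γ + lenP (C' i) := by
        rw [hC, circConcat_comp S g γ hγ i, lenP_compP]
      have hL : takeP S (prepSeq γ (act g ξ)) (lenP (C (i + 1))) = C (i + 1) := by
        rw [hmlen, takeP_prepSeq, htake' i, hC, circConcat_comp S g γ hγ i]
      have hR : takeP S ξ (lenP (C (i + 1))) = C (i + 1) := hξ.2 (i + 1)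
      have hi : i < lenP (C (i + 1)) := lt_of_lt_of_le (Nat.lt_succ_self i) (hCge (i + 1))
      have t1 := nthEdge_takeP S _ (prepSeq γ (act g ξ)) i hi
      have t2 := nthEdge_takeP S _ ξ i hi
      rw [hL] at t1
      rw [hR] at t2
      rw [t1] at t2
      injection t2
    rw [prepSeq_compP, hkey]
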